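/- Beth definability from Craig interpolation in ITLNL: let A be an ITLNL formula containing variable p, let p' be a fresh variable, and suppose ⊨ □_a A ∧ □_a [p'/p]A → □_a(p ≡ p') (A implicitly defines p). Assuming ITLNL has uniform Craig interpolation, there exists a formula C with Var(C) ⊆ Var(A)\{p} such that ⊨ □_a A → □_a(p ≡ C). -/

import Mathlib

/-- Formulas of ITLNL: ITL extended with the neighbourhood modalities `◇_l`, `◇_r`. -/
inductive ITLNL (V : Type) : Type
  | bot : ITLNL V
  | var : V → ITLNL V
  | imp : ITLNL V → ITLNL V → ITLNL V
  | next : ITLNL V → ITLNL V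
  | chop : ITLNL V → ITLNL V → ITLNL V
  | star : ITLNL V → ITLNL V
  | diaL : ITLNL V → ITLNL V
  | diaR : ITLNL V → ITLNL V

namespace ITLNL

variable {V : Type}

/-- Satisfaction `σ,i,j ⊨ A` for `σ : ℤ → Set V` and reference intervals `[i,j]`, `i ≤ j`. -/
def Sat (σ : ℤ → Set V) : ℤ → ℤ → ITLNL V → Prop
  | _, _, bot => False
  | i, _, var p => p ∈ σ i
  | i, j, imp A B => Sat σ i j A → Sat σ i j B
  | i, j, next A => i < j ∧ Sat σ (i + 1) j A
  | i, j, chop A B => ∃ k, i ≤ k ∧ k ≤ j ∧ Sat σ i k A ∧ Sat σ k j B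
  | i, j, star A => i = j ∨ ∃ (N : ℕ) (f : ℕ → ℤ), f 0 = i ∧ f N = j ∧
      (∀ n < N, f n < f (n + 1)) ∧ ∀ n < N, Sat σ (f n) (f (n + 1)) A
  | i, _, diaL A => ∃ k, k ≤ i ∧ Sat σ k i A
  | _, j, diaR A => ∃ k, j ≤ k ∧ Sat σ j k A

def top : ITLNL V := imp bot bot
def neg (A : ITLNL V) : ITLNL V := imp A bot
def or' (A B : ITLNL V) : ITLNL V := imp (neg A) B
def and' (A B : ITLNL V) : ITLNL V := neg (imp A (neg B))
def iff' (A B : ITLNL V) : ITLNL V := and' (imp A B) (imp B A)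
def empty : ITLNL V := neg (next top)
def skip : ITLNL V := next empty
def boxL (A : ITLNL V) : ITLNL V := neg (diaL (neg A))
def boxR (A : ITLNL V) : ITLNL V := neg (diaR (neg A))
/-- The universal-access diamond `◇_a := ◇_r◇_r◇_l◇_l`. -/
def diaA (A : ITLNL V) : ITLNL V := diaR (diaR (diaL (diaL A)))
/-- The universal modality `□_a := ¬◇_a¬`. -/
def boxA (A : ITLNL V) : ITLNL V := neg (diaA (neg A))

def bigOr : List (ITLNL V) → ITLNL V
  | [] => bot
  | A :: l => or' A (bigOr l)

def bigAnd : List (ITLNL V) → ITLNL V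
  | [] => top
  | A :: l => and' A (bigAnd l)

def Valid (A : ITLNL V) : Prop := ∀ (σ : ℤ → Set V) (i j : ℤ), i ≤ j → Sat σ i j A

/-- The set of propositional variables occurring in a formula. -/
def vars : ITLNL V → Set V
  | bot => ∅
  | var p => {p}
  | imp A B => vars A ∪ vars B
  | next A => vars A
  | chop A B => vars A ∪ vars B
  | star A => vars A
  | diaL A => vars A
  | diaR A => vars A

/-- Semantics of existential propositional quantification `∃p A`. -/
def SatEx (p : V) (A : ITLNL V) (σ : ℤ → Set V) (i j : ℤ) : Prop :=
  ∃ σ' : ℤ → Set V, (∀ k : ℤ, σ k \ {p} = σ' k \ {p}) ∧ Sat σ' i j A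

end ITLNL

namespace ITLNL

variable {V : Type} [DecidableEq V]

/-- `[p'/p]A`: substitution of variable `p'` for variable `p` in `A`. -/
def substVar (p p' : V) : ITLNL V → ITLNL V
  | bot => bot
  | var q => if q = p then var p' else var q
  | imp A B => imp (substVar p p' A) (substVar p p' B)
  | next A => next (substVar p p' A)
  | chop A B => chop (substVar p p' A) (substVar p p' B)
  | star A => star (substVar p p' A)
  | diaL A => diaL (substVar p p' A)
  | diaR A => diaR (substVar p p' A)

end ITLNL

open ITLNL

namespace ITLNL

variable {V : Type}

/-- Satisfaction only depends on the variables occurring in the formula. -/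
lemma sat_congr (σ σ' : ℤ → Set V) :
    ∀ (B : ITLNL V), (∀ (k : ℤ) (q : V), q ∈ vars B → (q ∈ σ k ↔ q ∈ σ' k)) →
      ∀ i j, Sat σ i j B ↔ Sat σ' i j B := by
  intro B
  induction B with
  | bot => intro _ i j; exact Iff.rfl
  | var q => intro h i j; exact h i q rfl
  | imp A B ihA ihB =>
      intro h i j
      have hA := ihA (fun k q hq => h k q (Or.inl hq))
      have hB := ihB (fun k q hq => h k q (Or.inr hq))
      simp only [Sat, hA, hB]
  | next A ih =>
      intro h i j
      simp only [Sat, ih h]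
  | chop A B ihA ihB =>
      intro h i j
      have hA := ihA (fun k q hq => h k q (Or.inl hq))
      have hB := ihB (fun k q hq => h k q (Or.inr hq))
      simp only [Sat, hA, hB]
  | star A ih =>
      intro h i j
      simp only [Sat, ih h]
  | diaL A ih =>
      intro h i j
      simp only [Sat, ih h]
  | diaR A ih =>
      intro h i j
      simp only [Sat, ih h]

/-- If `p` and `p'` agree everywhere in `σ`, substitution does not change satisfaction. -/
lemma sat_substVar [DecidableEq V] (p p' : V) (σ : ℤ → Set V)
    (h : ∀ k : ℤ, p ∈ σ k ↔ p' ∈ σ k) :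
    ∀ (B : ITLNL V) (i j : ℤ), Sat σ i j (substVar p p' B) ↔ Sat σ i j B := by
  intro B
  induction B with
  | bot => intro i j; exact Iff.rfl
  | var q =>
      intro i j
      by_cases hq : q = p
      · subst hq
        simp only [substVar, if_pos rfl, Sat]
        exact (h i).symm
      · simp only [substVar, if_neg hq]
  | imp A B ihA ihB => intro i j; simp only [substVar, Sat, ihA, ihB]
  | next A ih => intro i j; simp only [substVar, Sat, ih]
  | chop A B ihA ihB => intro i j; simp only [substVar, Sat, ihA, ihB]
  | star A ih => intro i j; simp only [substVar, Sat, ih]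
  | diaL A ih => intro i j; simp only [substVar, Sat, ih]
  | diaR A ih => intro i j; simp only [substVar, Sat, ih]

lemma vars_substVar_subset [DecidableEq V] (p p' : V) :
    ∀ B : ITLNL V, vars (substVar p p' B) ⊆ (vars B \ {p}) ∪ {p'} := by
  intro B
  induction B with
  | bot => simp [substVar, vars]
  | var q =>
      by_cases hq : q = p
      · subst hq; simp [substVar, vars]
      · intro x hx
        simp only [substVar, if_neg hq, vars, Set.mem_singleton_iff] at hx
        subst hx
        exact Or.inl ⟨rfl, hq⟩
  | imp A B ihA ihB =>
      intro x hx
      rcases hx with hx | hx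
      · rcases ihA hx with ⟨h1, h2⟩ | h; exacts [Or.inl ⟨Or.inl h1, h2⟩, Or.inr h]
      · rcases ihB hx with ⟨h1, h2⟩ | h; exacts [Or.inl ⟨Or.inr h1, h2⟩, Or.inr h]
  | next A ih => exact ih
  | chop A B ihA ihB =>
      intro x hx
      rcases hx with hx | hx
      · rcases ihA hx with ⟨h1, h2⟩ | h; exacts [Or.inl ⟨Or.inl h1, h2⟩, Or.inr h]
      · rcases ihB hx with ⟨h1, h2⟩ | h; exacts [Or.inl ⟨Or.inr h1, h2⟩, Or.inr h]
  | star A ih => exact ih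
  | diaL A ih => exact ih
  | diaR A ih => exact ih

@[simp] lemma sat_neg {σ : ℤ → Set V} {i j : ℤ} {B : ITLNL V} :
    Sat σ i j (neg B) ↔ ¬ Sat σ i j B := Iff.rfl

@[simp] lemma sat_and' {σ : ℤ → Set V} {i j : ℤ} {B C : ITLNL V} :
    Sat σ i j (and' B C) ↔ Sat σ i j B ∧ Sat σ i j C := by
  simp only [and', Sat, sat_neg]
  tauto

@[simp] lemma sat_iff' {σ : ℤ → Set V} {i j : ℤ} {B C : ITLNL V} :
    Sat σ i j (iff' B C) ↔ (Sat σ i j B ↔ Sat σ i j C) := by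
  simp only [iff', sat_and', Sat]
  tauto

/-- `□_a` is the universal modality: `boxA B` holds iff `B` holds at every interval. -/
lemma sat_boxA {σ : ℤ → Set V} {i j : ℤ} {B : ITLNL V} :
    Sat σ i j (boxA B) ↔ ∀ m n : ℤ, m ≤ n → Sat σ m n B := by
  constructor
  · intro h m n hmn
    by_contra hB
    apply h
    exact ⟨max j n, le_max_left _ _, max j n, le_refl _, n, le_max_right _ _, m, hmn, hB⟩
  · rintro h ⟨k1, hk1, k2, hk2, k3, hk3, k4, hk4, hB⟩
    exact hB (h k4 k3 hk4)

@[simp] lemma vars_neg (B : ITLNL V) : vars (neg B) = vars B := by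
  simp [neg, vars]

@[simp] lemma vars_boxA (B : ITLNL V) : vars (boxA B) = vars B := by
  simp [boxA, diaA, vars]

end ITLNL

/-- Beth definability from Craig interpolation in ITLNL: if `A`
(containing `p`) implicitly defines `p`, i.e.
`⊨ □_a A ∧ □_a [p'/p]A → □_a(p ≡ p')` for fresh `p'`, then (assuming Craig
interpolation for ITLNL) there is a `C` with `Var C ⊆ Var A \ {p}` such that
`⊨ □_a A → □_a(p ≡ C)`. -/
theorem beth_definability {V : Type} [DecidableEq V] (A : ITLNL V) (p p' : V)
    (hp : p ∈ vars A) (hfresh : p' ∉ vars A) (hne : p' ≠ p)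
    (hCraig : ∀ X Y : ITLNL V, Valid (imp X Y) →
      ∃ C : ITLNL V, vars C ⊆ vars X ∩ vars Y ∧ Valid (imp X C) ∧ Valid (imp C Y))
    (himplicit : Valid (imp (and' (boxA A) (boxA (substVar p p' A)))
      (boxA (iff' (var p) (var p'))))) :
    ∃ C : ITLNL V, vars C ⊆ vars A \ {p} ∧
      Valid (imp (boxA A) (boxA (iff' (var p) C))) := by
  classical
  set A' : ITLNL V := substVar p p' A with hA'
  -- The valid implication to interpolate.
  have hval : Valid (imp (and' (boxA A) (var p)) (imp (boxA A') (var p'))) := by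
    intro σ i j hij
    show Sat σ i j (and' (boxA A) (var p)) → Sat σ i j (imp (boxA A') (var p'))
    rintro hXY
    rw [sat_and'] at hXY
    intro hA'sat
    have := himplicit σ i j hij
    have h2 : Sat σ i j (boxA (iff' (var p) (var p'))) := by
      apply this
      rw [sat_and']
      exact ⟨hXY.1, hA'sat⟩
    have h3 := sat_boxA.mp h2 i j hij
    rw [sat_iff'] at h3
    exact h3.mp hXY.2
  obtain ⟨C, hCvars, hXC, hCY⟩ := hCraig _ _ hval
  refine ⟨C, ?_, ?_⟩
  · -- variable condition
    intro q hq
    have hq' := hCvars hq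
    rcases hq' with ⟨hqX, hqY⟩
    simp only [and', neg, vars, vars_boxA, Set.mem_union, Set.mem_singleton_iff, Set.mem_empty_iff_false, or_false, false_or] at hqX hqY
    have hqA : q ∈ vars A := by
      rcases hqX with h | h
      · exact h
      · subst h; exact hp
    have hqp' : q ≠ p' := fun h => hfresh (h ▸ hqA)
    have hqp : q ≠ p := by
      rcases hqY with h | h
      · rcases vars_substVar_subset p p' A h with ⟨_, hne2⟩ | h2
        · exact fun hc => hne2 hc
        · exact absurd h2 hqp'
      · exact absurd h hqp'
    exact ⟨hqA, hqp⟩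
  · -- validity of the explicit definition
    intro σ i j hij
    show Sat σ i j (boxA A) → Sat σ i j (boxA (iff' (var p) C))
    intro hboxA
    have hAall := sat_boxA.mp hboxA
    rw [sat_boxA]
    intro m n hmn
    rw [sat_iff']
    constructor
    · -- p → C
      intro hpm
      have := hXC σ m n hmn
      apply this
      rw [sat_and']
      exact ⟨sat_boxA.mpr hAall, hpm⟩
    · -- C → p : use the model σ' where p' copies p
      intro hCsat
      set σ' : ℤ → Set V := fun k => {q | if q = p' then p ∈ σ k else q ∈ σ k} with hσ'
      have hagree : ∀ (k : ℤ) (q : V), q ≠ p' → (q ∈ σ k ↔ q ∈ σ' k) := by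
        intro k q hq
        simp [hσ', Set.mem_setOf_eq, if_neg hq]
      have hpp' : ∀ k : ℤ, p ∈ σ' k ↔ p' ∈ σ' k := by
        intro k
        simp [hσ', Set.mem_setOf_eq, if_neg hne.symm]
      -- A holds everywhere in σ'
      have hAall' : ∀ m' n' : ℤ, m' ≤ n' → Sat σ' m' n' A := by
        intro m' n' h'
        have := sat_congr σ σ' A (fun k q hq =>
          hagree k q (fun hc => hfresh (hc ▸ hq))) m' n'
        exact this.mp (hAall m' n' h')
      -- hence A' holds everywhere in σ'
      have hA'all' : ∀ m' n' : ℤ, m' ≤ n' → Sat σ' m' n' A' := by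
        intro m' n' h'
        exact (sat_substVar p p' σ' hpp' A m' n').mpr (hAall' m' n' h')
      -- C holds at (m,n) in σ'
      have hCnp' : p' ∉ vars C := by
        intro h
        have := (hCvars h).1
        simp only [and', neg, vars, vars_boxA, Set.mem_union, Set.mem_singleton_iff, Set.mem_empty_iff_false, or_false, false_or] at this
        rcases this with h1 | h1
        · exact hfresh h1
        · exact hne h1
      have hCsat' : Sat σ' m n C := by
        have := sat_congr σ σ' C (fun k q hq =>
          hagree k q (fun hc => hCnp' (hc ▸ hq))) m n
        exact this.mp hCsat
      -- apply C → Y in σ'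
      have hY : Sat σ' m n (imp (boxA A') (var p')) := hCY σ' m n hmn hCsat'
      have hp'm : Sat σ' m n (var p') := hY (sat_boxA.mpr hA'all')
      -- conclude p ∈ σ m
      have : p' ∈ σ' m := hp'm
      simp only [hσ', Set.mem_setOf_eq, if_pos rfl] at this
      exact this
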